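/- arXiv:2504.16703 — 6 statements merged into one kernel-verified Lean document; each statement's English description precedes it below -/
import Mathlib

section
/- Let ⟨C(Q, Σ, Ψ), t⟩ be a configuration of a μStipula^DI contract C (equivalently, of a μStipula^DI+ contract). If Q ∉ InitEv(C) or Σ ≠ −, then ⟨C(Q, Σ, Ψ), t⟩ → ℂ if and only if ⟨C(Q, Σ, Ψ), t⟩ →_tp ℂ, for every configuration ℂ. -/
namespace MicroStipula

/-- A pending event (the same shape is used for event declarations occurring in
function bodies): `time ≫_line src ⇒ tgt`.  For a declaration, `time` is the delay `k`
of the time expression `now + k`. -/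
structure Ev where
  time : ℕ
  line : ℕ
  src  : ℕ
  tgt  : ℕ
  deriving DecidableEq

/-- A function declaration `@src name { body } ⇒ @tgt`. -/
structure FunDecl where
  src  : ℕ
  name : ℕ
  body : List Ev
  tgt  : ℕ
  deriving DecidableEq

/-- A μStipula contract: a finite set of states, an initial state and
a finite set of functions. -/
structure Contract where
  states : List ℕ
  init   : ℕ
  funs   : List FunDecl
  deriving DecidableEq

/-- The `Σ` component of a configuration: either `−` or a continuation `Ψ ⇒ Q`. -/
inductive Sig where
  | none : Sig
  | cont : Multiset Ev → ℕ → Sig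
  deriving DecidableEq

/-- A configuration `⟨C(Q, Σ, Ψ), t⟩`. -/
structure Config where
  state   : ℕ
  sig     : Sig
  pending : Multiset Ev
  time    : ℕ
  deriving DecidableEq

/-- `nored(Ψ, Q)`: `Ψ` contains no event of the form `0 ≫_n Q ⇒ Q'`. -/
def nored (Ψ : Multiset Ev) (Q : ℕ) : Prop :=
  ∀ e ∈ Ψ, e.time = 0 → e.src ≠ Q

/-- `Ψ↓`: remove the events with time value `0` and decrease all other time values by one. -/
def tickDown (Ψ : Multiset Ev) : Multiset Ev :=
  (Ψ.filter fun e => e.time ≠ 0).map fun e => ⟨e.time - 1, e.line, e.src, e.tgt⟩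

/-- The multiset of pending events generated by a function body
(the place-holder `now` is dropped: `now + k` becomes the value `k`). -/
def bodyEvents (W : List Ev) : Multiset Ev := (W : Multiset Ev)

/-- `InitEv C`: the set of initial states of the events of `C`. -/
def InitEv (C : Contract) : Set ℕ :=
  {Q | ∃ f ∈ C.funs, ∃ e ∈ f.body, e.src = Q}

/-- The transition relation `→` of μStipula. -/
inductive Step (C : Contract) : Config → Config → Prop
  | func {Ψ : Multiset Ev} {t : ℕ} (f : FunDecl) (hf : f ∈ C.funs)
      (hn : nored Ψ f.src) :
      Step C ⟨f.src, Sig.none, Ψ, t⟩ ⟨f.src, Sig.cont (bodyEvents f.body) f.tgt, Ψ, t⟩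
  | stateChange {Q Q' : ℕ} {Ψ' Ψ : Multiset Ev} {t : ℕ} :
      Step C ⟨Q, Sig.cont Ψ' Q', Ψ, t⟩ ⟨Q', Sig.none, Ψ' + Ψ, t⟩
  | eventMatch {Q : ℕ} {Ψ : Multiset Ev} {t : ℕ} (e : Ev)
      (he : e ∈ Ψ) (h0 : e.time = 0) (hs : e.src = Q) :
      Step C ⟨Q, Sig.none, Ψ, t⟩ ⟨Q, Sig.cont 0 e.tgt, Ψ.erase e, t⟩
  | tick {Q : ℕ} {Ψ : Multiset Ev} {t : ℕ} (hn : nored Ψ Q) :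
      Step C ⟨Q, Sig.none, Ψ, t⟩ ⟨Q, Sig.none, tickDown Ψ, t + 1⟩

/-- The transition relation `→_tp` of μStipula^DI+ (rule (Tick) replaced by (Tick-Plus)). -/
inductive StepTP (C : Contract) : Config → Config → Prop
  | func {Ψ : Multiset Ev} {t : ℕ} (f : FunDecl) (hf : f ∈ C.funs)
      (hn : nored Ψ f.src) :
      StepTP C ⟨f.src, Sig.none, Ψ, t⟩ ⟨f.src, Sig.cont (bodyEvents f.body) f.tgt, Ψ, t⟩
  | stateChange {Q Q' : ℕ} {Ψ' Ψ : Multiset Ev} {t : ℕ} :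
      StepTP C ⟨Q, Sig.cont Ψ' Q', Ψ, t⟩ ⟨Q', Sig.none, Ψ' + Ψ, t⟩
  | eventMatch {Q : ℕ} {Ψ : Multiset Ev} {t : ℕ} (e : Ev)
      (he : e ∈ Ψ) (h0 : e.time = 0) (hs : e.src = Q) :
      StepTP C ⟨Q, Sig.none, Ψ, t⟩ ⟨Q, Sig.cont 0 e.tgt, Ψ.erase e, t⟩
  | tickPlus {Q : ℕ} {Ψ : Multiset Ev} {t : ℕ} (hn : Q ∉ InitEv C) :
      StepTP C ⟨Q, Sig.none, Ψ, t⟩ ⟨Q, Sig.none, tickDown Ψ, t + 1⟩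

/-- State reachability (w.r.t. `→`): some configuration `⟨C(Q, −, Ψ), t'⟩` is reachable
from the initial configuration `⟨C(Q_init, −, −), t⟩`. -/
def Reachable (C : Contract) (Q : ℕ) : Prop :=
  ∃ t t' Ψ, Relation.ReflTransGen (Step C)
    ⟨C.init, Sig.none, 0, t⟩ ⟨Q, Sig.none, Ψ, t'⟩

/-- State reachability w.r.t. `→_tp`. -/
def ReachableTP (C : Contract) (Q : ℕ) : Prop :=
  ∃ t t' Ψ, Relation.ReflTransGen (StepTP C)
    ⟨C.init, Sig.none, 0, t⟩ ⟨Q, Sig.none, Ψ, t'⟩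

/-- Well-formedness: every state mentioned in the contract belongs to its set of states. -/
def Contract.WF (C : Contract) : Prop :=
  C.init ∈ C.states ∧ ∀ f ∈ C.funs, f.src ∈ C.states ∧ f.tgt ∈ C.states ∧
    ∀ e ∈ f.body, e.src ∈ C.states ∧ e.tgt ∈ C.states

/-- μStipula^I : every time expression is `now + 0`. -/
def Instantaneous (C : Contract) : Prop := ∀ f ∈ C.funs, ∀ e ∈ f.body, e.time = 0

/-- μStipula^TA : every time expression is `now + k` with `k > 0`. -/
def TimeAhead (C : Contract) : Prop := ∀ f ∈ C.funs, ∀ e ∈ f.body, 0 < e.time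

/-- μStipula^D : no state is both the initial state of a function and of an event. -/
def Determinate (C : Contract) : Prop := ∀ f ∈ C.funs, f.src ∉ InitEv C

/-- μStipula^DI. -/
def DetInst (C : Contract) : Prop := Determinate C ∧ Instantaneous C

/-- A pending event of the contract `C`: it stems from an event declaration of `C`,
with a (possibly) decreased time value. -/
def EvOf (C : Contract) (e : Ev) : Prop :=
  ∃ f ∈ C.funs, ∃ d ∈ f.body,
    e.line = d.line ∧ e.src = d.src ∧ e.tgt = d.tgt ∧ e.time ≤ d.time

/-- The possible `Σ` components of configurations of `C`. -/
inductive SigOf (C : Contract) : Sig → Prop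
  | none : SigOf C Sig.none
  | func (f : FunDecl) (hf : f ∈ C.funs) : SigOf C (Sig.cont (bodyEvents f.body) f.tgt)
  | event (Q : ℕ) (hQ : Q ∈ C.states) : SigOf C (Sig.cont 0 Q)

/-- Configurations of a contract `C` (the set `𝒞_C`). -/
def ConfigOf (C : Contract) (c : Config) : Prop :=
  c.state ∈ C.states ∧ SigOf C c.sig ∧ ∀ e ∈ c.pending, EvOf C e

/-- The quasi-ordering `⪯` on configurations: same state, same `Σ`, multiset inclusion
of the pending events; the time component is disregarded. -/
def ConfigLe (c c' : Config) : Prop :=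
  c.state = c'.state ∧ c.sig = c'.sig ∧ c.pending ≤ c'.pending

/-- The (unique) shape of a (Tick) transition out of a configuration. -/
def IsTickStep (c c' : Config) : Prop :=
  c.sig = Sig.none ∧ c' = ⟨c.state, Sig.none, tickDown c.pending, c.time + 1⟩

/-- A configuration is stuck if every computation starting from it consists only of
instances of rule (Tick). -/
def Stuck (C : Contract) (c : Config) : Prop :=
  ∀ c₁ c₂, Relation.ReflTransGen (Step C) c c₁ → Step C c₁ c₂ → IsTickStep c₁ c₂

/-- A well-quasi-ordering: every infinite sequence contains an increasing pair. -/
def IsWQO {α : Type*} (r : α → α → Prop) : Prop :=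
  ∀ f : ℕ → α, ∃ i j, i < j ∧ r (f i) (f j)

/-- Upward compatibility of an ordering with a transition relation. -/
def UpwardCompatible {α : Type*} (step le : α → α → Prop) : Prop :=
  ∀ c₁ c₁' c₂, le c₁ c₁' → step c₁ c₂ →
    ∃ c₂', Relation.ReflTransGen step c₁' c₂' ∧ le c₂ c₂'

/-- Well-structured transition system. -/
def IsWSTS {α : Type*} (step le : α → α → Prop) : Prop :=
  Reflexive le ∧ Transitive le ∧ IsWQO le ∧ UpwardCompatible step le

/-- `↑𝒟` within the configurations of `C`. -/
def upSet (C : Contract) (D : Set Config) : Set Config :=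
  {c' | ConfigOf C c' ∧ ∃ c ∈ D, ConfigLe c c'}

/-- `Pred(𝒟)` w.r.t. `→_tp`, within the configurations of `C`. -/
def predTP (C : Contract) (D : Set Config) : Set Config :=
  {c | ConfigOf C c ∧ ∃ c' ∈ D, StepTP C c c'}

/-! ### Encodings -/

def Ev.equivProd : Ev ≃ ℕ × ℕ × ℕ × ℕ :=
  ⟨fun e => (e.time, e.line, e.src, e.tgt), fun p => ⟨p.1, p.2.1, p.2.2.1, p.2.2.2⟩,
   fun _ => rfl, fun _ => rfl⟩

instance : Encodable Ev := Encodable.ofEquiv _ Ev.equivProd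

def FunDecl.equivProd : FunDecl ≃ ℕ × ℕ × List Ev × ℕ :=
  ⟨fun f => (f.src, f.name, f.body, f.tgt), fun p => ⟨p.1, p.2.1, p.2.2.1, p.2.2.2⟩,
   fun _ => rfl, fun _ => rfl⟩

instance : Encodable FunDecl := Encodable.ofEquiv _ FunDecl.equivProd

def Contract.equivProd : Contract ≃ List ℕ × ℕ × List FunDecl :=
  ⟨fun C => (C.states, C.init, C.funs), fun p => ⟨p.1, p.2.1, p.2.2⟩,
   fun _ => rfl, fun _ => rfl⟩

instance : Encodable Contract := Encodable.ofEquiv _ Contract.equivProd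

def Sig.equivOption : Sig ≃ Option (Multiset Ev × ℕ) where
  toFun s := match s with | Sig.none => Option.none | Sig.cont m q => some (m, q)
  invFun o := match o with | Option.none => Sig.none | some (m, q) => Sig.cont m q
  left_inv s := by cases s <;> rfl
  right_inv o := by rcases o with _ | ⟨m, q⟩ <;> rfl

instance : Encodable Sig := Encodable.ofEquiv _ Sig.equivOption

def Config.equivProd : Config ≃ ℕ × Sig × Multiset Ev × ℕ :=
  ⟨fun c => (c.state, c.sig, c.pending, c.time), fun p => ⟨p.1, p.2.1, p.2.2.1, p.2.2.2⟩,
   fun _ => rfl, fun _ => rfl⟩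

instance : Encodable Config := Encodable.ofEquiv _ Config.equivProd

/-! ### Minsky machines -/

/-- A Minsky machine instruction (the register is `false` for `R₁`, `true` for `R₂`):
`inc r next` and `decjump r ifZero ifPos`. -/
inductive MInstr where
  | inc : Bool → ℕ → MInstr
  | decjump : Bool → ℕ → ℕ → MInstr
  deriving DecidableEq

/-- A Minsky machine. -/
structure Minsky where
  states : List ℕ
  init   : ℕ
  final  : ℕ
  prog   : List (ℕ × MInstr)
  deriving DecidableEq

/-- Well-formed Minsky machine: the final state has no instruction. -/
def Minsky.WF (M : Minsky) : Prop :=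
  M.init ∈ M.states ∧ M.final ∈ M.states ∧ (∀ i, (M.final, i) ∉ M.prog) ∧
  ∀ p ∈ M.prog, p.1 ∈ M.states ∧
    (match p.2 with
     | MInstr.inc _ q => q ∈ M.states
     | MInstr.decjump _ q q' => q ∈ M.states ∧ q' ∈ M.states)

/-- The transition relation of a Minsky machine on configurations `(Q, v₁, v₂)`. -/
inductive MStep (M : Minsky) : ℕ × ℕ × ℕ → ℕ × ℕ × ℕ → Prop
  | inc₁ {Q Q' v₁ v₂} : (Q, MInstr.inc false Q') ∈ M.prog →
      MStep M (Q, v₁, v₂) (Q', v₁ + 1, v₂)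
  | inc₂ {Q Q' v₁ v₂} : (Q, MInstr.inc true Q') ∈ M.prog →
      MStep M (Q, v₁, v₂) (Q', v₁, v₂ + 1)
  | jz₁ {Q Q' Q'' v₂} : (Q, MInstr.decjump false Q' Q'') ∈ M.prog →
      MStep M (Q, 0, v₂) (Q', 0, v₂)
  | dec₁ {Q Q' Q'' v₁ v₂} : (Q, MInstr.decjump false Q' Q'') ∈ M.prog →
      MStep M (Q, v₁ + 1, v₂) (Q'', v₁, v₂)
  | jz₂ {Q Q' Q'' v₁} : (Q, MInstr.decjump true Q' Q'') ∈ M.prog →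
      MStep M (Q, v₁, 0) (Q', v₁, 0)
  | dec₂ {Q Q' Q'' v₁ v₂} : (Q, MInstr.decjump true Q' Q'') ∈ M.prog →
      MStep M (Q, v₁, v₂ + 1) (Q'', v₁, v₂)

/-- The halting problem: the final state is reachable from `(Q₀, 0, 0)`. -/
def Minsky.Halts (M : Minsky) : Prop :=
  ∃ v₁ v₂, Relation.ReflTransGen (MStep M) (M.init, 0, 0) (M.final, v₁, v₂)

def MInstr.equivSum : MInstr ≃ (Bool × ℕ) ⊕ (Bool × ℕ × ℕ) where
  toFun i := match i with
    | MInstr.inc r q => Sum.inl (r, q)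
    | MInstr.decjump r q q' => Sum.inr (r, q, q')
  invFun s := match s with
    | Sum.inl (r, q) => MInstr.inc r q
    | Sum.inr (r, q, q') => MInstr.decjump r q q'
  left_inv i := by cases i <;> rfl
  right_inv s := by rcases s with ⟨r, q⟩ | ⟨r, q, q'⟩ <;> rfl

instance : Encodable MInstr := Encodable.ofEquiv _ MInstr.equivSum

def Minsky.equivProd : Minsky ≃ List ℕ × ℕ × ℕ × List (ℕ × MInstr) :=
  ⟨fun M => (M.states, M.init, M.final, M.prog), fun p => ⟨p.1, p.2.1, p.2.2.1, p.2.2.2⟩,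
   fun _ => rfl, fun _ => rfl⟩

instance : Encodable Minsky := Encodable.ofEquiv _ Minsky.equivProd

/-! ### Clauses -/

/-- A clause of a contract: either a function `⟨Q, f, Q'⟩` or an event `⟨Q, ev_n, Q'⟩`. -/
inductive Clause where
  | fn : ℕ → ℕ → ℕ → Clause
  | ev : ℕ → ℕ → ℕ → Clause
  deriving DecidableEq

/-- The clause belongs to the contract. -/
def ClauseOf (C : Contract) : Clause → Prop
  | Clause.fn Q g Q' => ∃ f ∈ C.funs, f.src = Q ∧ f.name = g ∧ f.tgt = Q'
  | Clause.ev Q n Q' => ∃ f ∈ C.funs, ∃ e ∈ f.body, e.line = n ∧ e.src = Q ∧ e.tgt = Q'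

/-- Some computation starting from the initial configuration of `C` contains a transition
executing the given clause: an instance of rule (Function) invoking the function, resp.
an instance of rule (Event-Match) firing the event. -/
def Executes (C : Contract) : Clause → Prop
  | Clause.fn Q g Q' => ∃ t t' Ψ, ∃ f ∈ C.funs,
      f.src = Q ∧ f.name = g ∧ f.tgt = Q' ∧ nored Ψ Q ∧
      Relation.ReflTransGen (Step C) ⟨C.init, Sig.none, 0, t⟩ ⟨Q, Sig.none, Ψ, t'⟩
  | Clause.ev Q n Q' => ∃ t t' Ψ, ∃ e ∈ Ψ,
      e.time = 0 ∧ Ev.line e = n ∧ e.src = Q ∧ e.tgt = Q' ∧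
      Relation.ReflTransGen (Step C) ⟨C.init, Sig.none, 0, t⟩ ⟨Q, Sig.none, Ψ, t'⟩

def Clause.equivSum : Clause ≃ (ℕ × ℕ × ℕ) ⊕ (ℕ × ℕ × ℕ) where
  toFun c := match c with
    | Clause.fn a b d => Sum.inl (a, b, d)
    | Clause.ev a b d => Sum.inr (a, b, d)
  invFun s := match s with
    | Sum.inl (a, b, d) => Clause.fn a b d
    | Sum.inr (a, b, d) => Clause.ev a b d
  left_inv c := by cases c <;> rfl
  right_inv s := by rcases s with ⟨a, b, d⟩ | ⟨a, b, d⟩ <;> rfl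

instance : Encodable Clause := Encodable.ofEquiv _ Clause.equivSum

/-- `⟦v₁, v₂⟧_Q`: the multiset made of `v₁` copies of a first event, `v₂` copies of a
second event, and one event depending on the machine state `Q`. -/
def msem (e₁ e₂ : Minsky → Ev) (e₃ : Minsky → ℕ → Ev) (M : Minsky)
    (Q v₁ v₂ : ℕ) : Multiset Ev :=
  Multiset.replicate v₁ (e₁ M) + Multiset.replicate v₂ (e₂ M) + {e₃ M Q}


/-- (Proposition 1.(i)) For a configuration `⟨C(Q, Σ, Ψ), t⟩` of a
μStipula^DI contract `C` (equivalently, of a μStipula^DI+ contract), if `Q ∉ InitEv(C)`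
or `Σ ≠ −`, then `⟨C(Q, Σ, Ψ), t⟩ → ℂ` iff `⟨C(Q, Σ, Ψ), t⟩ →_tp ℂ`. -/
theorem step_iff_stepTP_of_notInitEv_or_sig (C : Contract) (hwf : C.WF) (hDI : DetInst C)
    (Q : ℕ) (S : Sig) (Ψ : Multiset Ev) (t : ℕ)
    (hconf : ConfigOf C ⟨Q, S, Ψ, t⟩)
    (h : Q ∉ InitEv C ∨ S ≠ Sig.none) :
    ∀ c : Config, Step C ⟨Q, S, Ψ, t⟩ c ↔ StepTP C ⟨Q, S, Ψ, t⟩ c := by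
  intro c
  have hQ : S = Sig.none → Q ∉ InitEv C := by
    intro hS; rcases h with h | h
    · exact h
    · exact absurd hS h
  have hnored : Q ∉ InitEv C → nored Ψ Q := by
    intro hni e he h0 hsrc
    obtain ⟨f, hf, d, hd, _, hsrc', _, _⟩ := hconf.2.2 e he
    exact hni ⟨f, hf, d, hd, by rw [← hsrc', hsrc]⟩
  constructor
  · intro hs
    cases hs with
    | func f hf hn => exact StepTP.func f hf hn
    | stateChange => exact StepTP.stateChange
    | eventMatch e he h0 hsrc => exact StepTP.eventMatch e he h0 hsrc
    | tick hn => exact StepTP.tickPlus (hQ rfl)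
  · intro hs
    cases hs with
    | func f hf hn => exact Step.func f hf hn
    | stateChange => exact Step.stateChange
    | eventMatch e he h0 hsrc => exact Step.eventMatch e he h0 hsrc
    | tickPlus hn => exact Step.tick (hnored hn)

end MicroStipula
end

section
/- Let ⟨C(Q, −, Ψ), t⟩ be a configuration of a μStipula^DI contract C (equivalently, of a μStipula^DI+ contract). If Q ∈ InitEv(C) and Ψ = 0 ≫_n Q ⇒ Q' | Ψ' for some n, Q', Ψ', then ⟨C(Q, −, Ψ), t⟩ → ℂ if and only if ⟨C(Q, −, Ψ), t⟩ →_tp ℂ, for every configuration ℂ. -/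
namespace MicroStipula

/-- (Proposition 1.(ii)) For a configuration `⟨C(Q, −, Ψ), t⟩` of a
μStipula^DI contract `C` (equivalently, of a μStipula^DI+ contract), if `Q ∈ InitEv(C)`
and `Ψ = 0 ≫_n Q ⇒ Q' | Ψ'` for some `n`, `Q'`, `Ψ'`, then
`⟨C(Q, −, Ψ), t⟩ → ℂ` iff `⟨C(Q, −, Ψ), t⟩ →_tp ℂ`. -/
theorem step_iff_stepTP_of_initEv_event (C : Contract) (hwf : C.WF) (hDI : DetInst C)
    (Q : ℕ) (Ψ : Multiset Ev) (t : ℕ)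
    (hconf : ConfigOf C ⟨Q, Sig.none, Ψ, t⟩)
    (hQ : Q ∈ InitEv C)
    (hΨ : ∃ (n Q' : ℕ) (Ψ' : Multiset Ev), Ψ = (⟨0, n, Q, Q'⟩ : Ev) ::ₘ Ψ') :
    ∀ c : Config, Step C ⟨Q, Sig.none, Ψ, t⟩ c ↔ StepTP C ⟨Q, Sig.none, Ψ, t⟩ c := by
  obtain ⟨n, Q', Ψ', rfl⟩ := hΨ
  have hnot : ¬ nored ((⟨0, n, Q, Q'⟩ : Ev) ::ₘ Ψ') Q := fun h =>
    h ⟨0, n, Q, Q'⟩ (Multiset.mem_cons_self _ _) rfl rfl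
  intro c
  constructor
  · intro h
    cases h with
    | func f hf hn => exact absurd hn hnot
    | eventMatch e he h0 hs => exact StepTP.eventMatch e he h0 hs
    | tick hn => exact absurd hn hnot
  · intro h
    cases h with
    | func f hf hn => exact absurd hn hnot
    | eventMatch e he h0 hs => exact Step.eventMatch e he h0 hs
    | tickPlus hn => exact absurd hQ hn

end MicroStipula
end

section
/- Let ⟨C(Q, −, Ψ), t⟩ be a configuration of a μStipula^DI contract C (equivalently, of a μStipula^DI+ contract). If Q ∈ InitEv(C) and nored(Ψ, Q) holds, then ⟨C(Q, −, Ψ), t⟩ is stuck with respect to → if and only if ⟨C(Q, −, Ψ), t⟩ has no →_tp transition. -/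
namespace MicroStipula

/-- (Proposition 1.(iii)) For a configuration `⟨C(Q, −, Ψ), t⟩` of a
μStipula^DI contract `C` (equivalently, of a μStipula^DI+ contract), if `Q ∈ InitEv(C)`
and `nored(Ψ, Q)`, then `⟨C(Q, −, Ψ), t⟩` is stuck w.r.t. `→` iff it has no `→_tp`
transition. -/
theorem stuck_iff_no_stepTP (C : Contract) (hwf : C.WF) (hDI : DetInst C)
    (Q : ℕ) (Ψ : Multiset Ev) (t : ℕ)
    (hconf : ConfigOf C ⟨Q, Sig.none, Ψ, t⟩)
    (hQ : Q ∈ InitEv C) (hn : nored Ψ Q) :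
    Stuck C ⟨Q, Sig.none, Ψ, t⟩ ↔ ∀ c : Config, ¬ StepTP C ⟨Q, Sig.none, Ψ, t⟩ c := by
  obtain ⟨hdet, hinst⟩ := hDI
  have hΨ0 : ∀ e ∈ Ψ, e.time = 0 := by
    intro e he
    obtain ⟨_, _, hev⟩ := hconf
    obtain ⟨f, hf, d, hd, _, _, _, hle⟩ := hev e he
    have := hinst f hf d hd
    omega
  have htd : tickDown Ψ = 0 := by
    unfold tickDown
    rw [Multiset.filter_eq_nil.mpr]
    · simp
    · intro e he hne; exact hne (hΨ0 e he)
  have htd0 : tickDown (0 : Multiset Ev) = 0 := by simp [tickDown]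
  have key : ∀ c₁ c₂,
      (c₁.state = Q ∧ c₁.sig = Sig.none ∧ (c₁.pending = Ψ ∨ c₁.pending = 0)) →
      Step C c₁ c₂ →
      IsTickStep c₁ c₂ ∧
        (c₂.state = Q ∧ c₂.sig = Sig.none ∧ (c₂.pending = Ψ ∨ c₂.pending = 0)) := by
    rintro c₁ c₂ ⟨h1, h2, h3⟩ hstep
    cases hstep with
    | func f hf hn' => exact absurd hQ (h1 ▸ hdet f hf)
    | stateChange => simp at h2
    | eventMatch e he h0 hs =>
        rcases h3 with h3 | h3
        · exact absurd (hs.trans h1) (hn e (h3 ▸ he) h0)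
        · simp only [Config.pending] at h3; simp [h3] at he
    | tick hn' =>
        refine ⟨⟨rfl, rfl⟩, h1, rfl, Or.inr ?_⟩
        rcases h3 with h3 | h3 <;> simp only [Config.pending] at h3 <;>
          simp [Config.pending, h3, htd, htd0]
  constructor
  · intro _ c hstep
    cases hstep with
    | func f hf hn' => exact hdet f hf hQ
    | eventMatch e he h0 hs => exact hn e he h0 hs
    | tickPlus h => exact h hQ
  · intro _ c₁ c₂ hreach hstep
    have hinv : c₁.state = Q ∧ c₁.sig = Sig.none ∧ (c₁.pending = Ψ ∨ c₁.pending = 0) := by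
      clear hstep
      induction hreach with
      | refl => exact ⟨rfl, rfl, Or.inl rfl⟩
      | tail hr hs ih => exact (key _ _ ih hs).2
    exact (key _ _ hinv hstep).1

end MicroStipula
end

section
/- For every μStipula^DI contract C and every state Q of C, Q is reachable in C with respect to the relation → if and only if Q is reachable in C with respect to the relation →_tp. -/
namespace MicroStipula

/-- Invariant: every pending event (and every event in a continuation) has time `0`
and its source state is in `InitEv C`. -/
def Inv (C : Contract) (c : Config) : Prop :=
  (∀ e ∈ c.pending, e.time = 0 ∧ e.src ∈ InitEv C) ∧
  (∀ m q, c.sig = Sig.cont m q → ∀ e ∈ m, e.time = 0 ∧ e.src ∈ InitEv C)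

lemma body_prop {C : Contract} (hI : Instantaneous C) {f : FunDecl} (hf : f ∈ C.funs)
    {e : Ev} (he : e ∈ bodyEvents f.body) : e.time = 0 ∧ e.src ∈ InitEv C := by
  rw [bodyEvents, Multiset.mem_coe] at he
  exact ⟨hI f hf e he, ⟨f, hf, e, he, rfl⟩⟩

lemma nored_of_inv {C : Contract} {Ψ : Multiset Ev} {Q : ℕ}
    (h : ∀ e ∈ Ψ, e.time = 0 ∧ e.src ∈ InitEv C) (hQ : Q ∉ InitEv C) : nored Ψ Q := by
  intro e he _ hsrc
  exact hQ (hsrc ▸ (h e he).2)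

lemma tickDown_zero {C : Contract} {Ψ : Multiset Ev}
    (h : ∀ e ∈ Ψ, e.time = 0 ∧ e.src ∈ InitEv C) : tickDown Ψ = 0 := by
  rw [tickDown]
  have : Ψ.filter (fun e => e.time ≠ 0) = 0 := by
    rw [Multiset.filter_eq_nil]
    intro a ha hne
    exact hne (h a ha).1
  simp [this]

lemma inv_step {C : Contract} (hI : Instantaneous C) {c d : Config}
    (hc : Inv C c) (h : Step C c d) : Inv C d := by
  obtain ⟨h1, h2⟩ := hc
  cases h with
  | func f hf hn =>
      refine ⟨h1, ?_⟩
      rintro m q hmq e he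
      cases hmq
      exact body_prop hI hf he
  | stateChange =>
      rename_i Q Q' Ψ' Ψ t
      refine ⟨?_, by rintro m q ⟨⟩⟩
      intro e he
      rcases Multiset.mem_add.1 he with h' | h'
      · exact h2 Ψ' Q' rfl e h'
      · exact h1 e h'
  | eventMatch e he h0 hs =>
      refine ⟨fun a ha => h1 a (Multiset.mem_of_mem_erase ha), ?_⟩
      rintro m q ⟨⟩ a ha
      simp at ha
  | tick hn =>
      refine ⟨?_, by rintro m q ⟨⟩⟩
      rw [tickDown_zero h1]
      intro e he; simp at he

lemma inv_stepTP {C : Contract} (hI : Instantaneous C) {c d : Config}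
    (hc : Inv C c) (h : StepTP C c d) : Inv C d := by
  obtain ⟨h1, h2⟩ := hc
  cases h with
  | func f hf hn =>
      refine ⟨h1, ?_⟩
      rintro m q hmq e he
      cases hmq
      exact body_prop hI hf he
  | stateChange =>
      rename_i Q Q' Ψ' Ψ t
      refine ⟨?_, by rintro m q ⟨⟩⟩
      intro e he
      rcases Multiset.mem_add.1 he with h' | h'
      · exact h2 Ψ' Q' rfl e h'
      · exact h1 e h'
  | eventMatch e he h0 hs =>
      refine ⟨fun a ha => h1 a (Multiset.mem_of_mem_erase ha), ?_⟩
      rintro m q ⟨⟩ a ha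
      simp at ha
  | tickPlus hn =>
      refine ⟨?_, by rintro m q ⟨⟩⟩
      rw [tickDown_zero h1]
      intro e he; simp at he

lemma inv_runTP {C : Contract} (hI : Instantaneous C) {c d : Config}
    (h : Relation.ReflTransGen (StepTP C) c d) (hc : Inv C c) : Inv C d := by
  induction h with
  | refl => exact hc
  | tail _ hstep ih => exact inv_stepTP hI ih hstep

/-- Every TP step from an invariant configuration is an ordinary step. -/
lemma tpStep_to_step {C : Contract} {c d : Config} (hc : Inv C c)
    (h : StepTP C c d) : Step C c d := by
  cases h with
  | func f hf hn => exact Step.func f hf hn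
  | stateChange => exact Step.stateChange
  | eventMatch e he h0 hs => exact Step.eventMatch e he h0 hs
  | tickPlus hn => exact Step.tick (nored_of_inv hc.1 hn)

lemma tpRun_to_run {C : Contract} (hI : Instantaneous C) {c d : Config}
    (h : Relation.ReflTransGen (StepTP C) c d) (hc : Inv C c) :
    Relation.ReflTransGen (Step C) c d := by
  induction h with
  | refl => exact Relation.ReflTransGen.refl
  | tail hrun hstep ih =>
      exact ih.tail (tpStep_to_step (inv_runTP hI hrun hc) hstep)

/-- One-step simulation of `→` by `→_tp` up to multiset inclusion of pendings. -/
lemma simStep {C : Contract} (hDI : DetInst C) {c b : Config} (h : Step C c b)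
    (hc : Inv C c) {c' : Config} (hc' : Inv C c') (hst : c.state = c'.state)
    (hsg : c.sig = c'.sig) (hpd : c.pending ≤ c'.pending) :
    ∃ b', Relation.ReflTransGen (StepTP C) c' b' ∧ Inv C b' ∧
      b.state = b'.state ∧ b.sig = b'.sig ∧ b.pending ≤ b'.pending := by
  obtain ⟨hD, hI⟩ := hDI
  obtain ⟨Qc, Sc, Ψc, tc⟩ := c'
  cases h with
  | func f hf hn =>
      simp only at hst hsg hpd
      subst hst; subst hsg
      have hn' : nored Ψc f.src := nored_of_inv hc'.1 (hD f hf)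
      have hs : StepTP C ⟨f.src, Sig.none, Ψc, tc⟩
          ⟨f.src, Sig.cont (bodyEvents f.body) f.tgt, Ψc, tc⟩ := StepTP.func f hf hn'
      exact ⟨_, Relation.ReflTransGen.single hs, inv_stepTP hI hc' hs, rfl, rfl, hpd⟩
  | stateChange =>
      rename_i Q Q' Ψ' Ψ t
      simp only at hst hsg hpd
      subst hst; subst hsg
      have hs : StepTP C ⟨Q, Sig.cont Ψ' Q', Ψc, tc⟩ ⟨Q', Sig.none, Ψ' + Ψc, tc⟩ :=
        StepTP.stateChange
      exact ⟨_, Relation.ReflTransGen.single hs, inv_stepTP hI hc' hs, rfl, rfl,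
        add_le_add le_rfl hpd⟩
  | eventMatch e he h0 hs =>
      rename_i Qq Ψ t
      simp only at hst hsg hpd
      subst hst; subst hsg
      have he' : e ∈ Ψc := Multiset.mem_of_le hpd he
      have hstep : StepTP C ⟨Qq, Sig.none, Ψc, tc⟩ ⟨Qq, Sig.cont 0 e.tgt, Ψc.erase e, tc⟩ :=
        StepTP.eventMatch e he' h0 hs
      exact ⟨_, Relation.ReflTransGen.single hstep, inv_stepTP hI hc' hstep, rfl, rfl,
        Multiset.erase_le_erase e hpd⟩
  | tick hn =>
      rename_i Qq Ψ t
      simp only at hst hsg hpd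
      subst hst; subst hsg
      refine ⟨_, Relation.ReflTransGen.refl, hc', rfl, rfl, ?_⟩
      rw [tickDown_zero hc.1]
      exact zero_le

lemma simRun {C : Contract} (hDI : DetInst C) {c d : Config}
    (h : Relation.ReflTransGen (Step C) c d) (hc : Inv C c) {c' : Config} (hc' : Inv C c')
    (hst : c.state = c'.state) (hsg : c.sig = c'.sig) (hpd : c.pending ≤ c'.pending) :
    ∃ d', Relation.ReflTransGen (StepTP C) c' d' ∧ Inv C d' ∧
      d.state = d'.state ∧ d.sig = d'.sig ∧ d.pending ≤ d'.pending := by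
  induction h using Relation.ReflTransGen.head_induction_on generalizing c' with
  | refl => exact ⟨c', Relation.ReflTransGen.refl, hc', hst, hsg, hpd⟩
  | head hstep _ ih =>
      obtain ⟨b', hrun, hib, h1, h2, h3⟩ := simStep hDI hstep hc hc' hst hsg hpd
      obtain ⟨d', hrun', hid, g1, g2, g3⟩ :=
        ih (inv_step hDI.2 hc hstep) hib h1 h2 h3
      exact ⟨d', hrun.trans hrun', hid, g1, g2, g3⟩

/-- For every μStipula^DI contract `C` and every state `Q` of `C`,
`Q` is reachable in `C` w.r.t. `→` iff `Q` is reachable in `C` w.r.t. `→_tp`. -/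
theorem reachable_iff_reachableTP (C : Contract) (hwf : C.WF) (hDI : DetInst C)
    (Q : ℕ) (hQ : Q ∈ C.states) :
    Reachable C Q ↔ ReachableTP C Q := by
  constructor
  · rintro ⟨t, t', Ψ, hrun⟩
    have hinit : Inv C ⟨C.init, Sig.none, 0, t⟩ := ⟨by simp, by rintro m q ⟨⟩⟩
    obtain ⟨d', hrun', _, h1, h2, _⟩ := simRun hDI hrun hinit hinit rfl rfl le_rfl
    obtain ⟨Qd, Sd, Ψd, td⟩ := d'
    simp only at h1 h2
    subst h1; subst h2
    exact ⟨t, td, Ψd, hrun'⟩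
  · rintro ⟨t, t', Ψ, hrun⟩
    have hinit : Inv C ⟨C.init, Sig.none, 0, t⟩ := ⟨by simp, by rintro m q ⟨⟩⟩
    exact ⟨t, t', Ψ, tpRun_to_run hDI.2 hrun hinit⟩


end MicroStipula
end

section
/- For every μStipula^DI+ contract C, the triple (𝒞_C, →_tp, ⪯) — where 𝒞_C is the set of configurations of C — is a well-structured transition system. -/
namespace MicroStipula

/-! ### Auxiliary lemmas for Statement 9 -/

lemma evOf_src_initEv {C : Contract} {e : Ev} (h : EvOf C e) : e.src ∈ InitEv C := by
  obtain ⟨f, hf, d, hd, _, hsrc, _, _⟩ := h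
  exact ⟨f, hf, d, hd, hsrc.symm⟩

/-- All possible pending events of `C` form a finite set. -/
def evFinset (C : Contract) : Finset Ev :=
  C.funs.toFinset.biUnion fun f => f.body.toFinset.biUnion fun d =>
    (Finset.range (d.time + 1)).image fun t => ⟨t, d.line, d.src, d.tgt⟩

lemma mem_evFinset {C : Contract} {e : Ev} (h : EvOf C e) : e ∈ evFinset C := by
  obtain ⟨f, hf, d, hd, h1, h2, h3, h4⟩ := h
  simp only [evFinset, Finset.mem_biUnion, List.mem_toFinset, Finset.mem_image,
    Finset.mem_range]
  refine ⟨f, hf, d, hd, e.time, by omega, ?_⟩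
  cases e; simp_all

/-- All possible `Σ` components of `C` form a finite set. -/
def sigFinset (C : Contract) : Finset Sig :=
  insert Sig.none
    ((C.funs.toFinset.image fun f => Sig.cont (bodyEvents f.body) f.tgt) ∪
      C.states.toFinset.image fun Q => Sig.cont 0 Q)

lemma mem_sigFinset {C : Contract} {σ : Sig} (h : SigOf C σ) : σ ∈ sigFinset C := by
  cases h with
  | none => simp [sigFinset]
  | func f hf =>
      simp only [sigFinset, Finset.mem_insert, Finset.mem_union, Finset.mem_image,
        List.mem_toFinset]
      exact Or.inr (Or.inl ⟨f, hf, rfl⟩)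
  | event Q hQ =>
      simp only [sigFinset, Finset.mem_insert, Finset.mem_union, Finset.mem_image,
        List.mem_toFinset]
      exact Or.inr (Or.inr ⟨Q, hQ, rfl⟩)

/-- `→_tp` preserves membership in `𝒞_C`. -/
lemma configOf_stepTP {C : Contract} {c c' : Config} (hwf : C.WF)
    (h : ConfigOf C c) (hs : StepTP C c c') : ConfigOf C c' := by
  obtain ⟨hst, hsig, hpend⟩ := h
  cases hs with
  | func f hf hn => exact ⟨hst, SigOf.func f hf, hpend⟩
  | stateChange =>
      cases hsig with
      | func f hf =>
          refine ⟨(hwf.2 f hf).2.1, SigOf.none, ?_⟩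
          intro e he
          rcases Multiset.mem_add.mp he with h1 | h1
          · exact ⟨f, hf, e, by simpa [bodyEvents] using h1, rfl, rfl, rfl, le_refl _⟩
          · exact hpend e h1
      | event Q hQ =>
          refine ⟨hQ, SigOf.none, ?_⟩
          intro e he
          rcases Multiset.mem_add.mp he with h1 | h1
          · simp at h1
          · exact hpend e h1
  | eventMatch e he h0 hsQ =>
      obtain ⟨f, hf, d, hd, _, _, htgt, _⟩ := hpend e he
      refine ⟨hst, SigOf.event e.tgt ?_,
        fun a ha => hpend a (Multiset.mem_of_mem_erase ha)⟩
      rw [htgt]; exact ((hwf.2 f hf).2.2 d hd).2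
  | tickPlus hn =>
      refine ⟨hst, SigOf.none, ?_⟩
      intro e he
      simp only [tickDown, Multiset.mem_map, Multiset.mem_filter] at he
      obtain ⟨a, ⟨ha, hane⟩, hae⟩ := he
      obtain ⟨f, hf, d, hd, h1, h2, h3, h4⟩ := hpend a ha
      subst hae
      exact ⟨f, hf, d, hd, h1, h2, h3, by simp; omega⟩

/-- (Lemma 1) For every μStipula^DI+ contract `C`, the triple
`(𝒞_C, →_tp, ⪯)` is a well-structured transition system, where `𝒞_C` is the set of
configurations of `C`. -/
theorem isWSTS_DIplus (C : Contract) (hwf : C.WF) (hDI : DetInst C) :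
    IsWSTS (fun c c' : {c : Config // ConfigOf C c} => StepTP C c.1 c'.1)
           (fun c c' : {c : Config // ConfigOf C c} => ConfigLe c.1 c'.1) := by
  classical
  refine ⟨fun c => ⟨rfl, rfl, le_refl _⟩,
    fun a b c hab hbc => ⟨hab.1.trans hbc.1, hab.2.1.trans hbc.2.1, hab.2.2.trans hbc.2.2⟩,
    ?_, ?_⟩
  · -- WQO
    intro f
    -- pigeonhole on (state, sig)
    set P : Finset (ℕ × Sig) := C.states.toFinset ×ˢ sigFinset C with hP
    have hg : ∀ n, ((f n).1.state, (f n).1.sig) ∈ P := by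
      intro n
      obtain ⟨h1, h2, _⟩ := (f n).2
      exact Finset.mk_mem_product (List.mem_toFinset.mpr h1) (mem_sigFinset h2)
    let g' : ℕ → {p // p ∈ P} := fun n => ⟨((f n).1.state, (f n).1.sig), hg n⟩
    obtain ⟨p, hp⟩ := Finite.exists_infinite_fiber g'
    have hqinf : (setOf fun n => g' n = p).Infinite := by
      rw [← Set.infinite_coe_iff]; exact hp
    have hmem : ∀ k, g' (Nat.nth (fun n => g' n = p) k) = p :=
      fun k => Nat.nth_mem_of_infinite hqinf k
    -- Dickson's lemma on event counts
    let ι := {e : Ev // e ∈ evFinset C}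
    let cnt : ℕ → (ι → ℕ) :=
      fun n i => ((f (Nat.nth (fun n => g' n = p) n)).1.pending).count i.1
    have hpwo : WellQuasiOrdered (α := ι → ℕ) (· ≤ ·) := wellQuasiOrdered_le
    obtain ⟨m, n, hmn, hle⟩ := hpwo cnt
    have h1 := congrArg (fun x => x.1.1) (hmem m)
    have h2 := congrArg (fun x => x.1.1) (hmem n)
    have h3 := congrArg (fun x => x.1.2) (hmem m)
    have h4 := congrArg (fun x => x.1.2) (hmem n)
    simp only [g'] at h1 h2 h3 h4
    refine ⟨Nat.nth (fun n => g' n = p) m, Nat.nth (fun n => g' n = p) n,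
      Nat.nth_strictMono hqinf hmn, h1.trans h2.symm, h3.trans h4.symm, ?_⟩
    rw [Multiset.le_iff_count]
    intro a
    by_cases ha : a ∈ evFinset C
    · exact hle ⟨a, ha⟩
    · have : (f (Nat.nth (fun n => g' n = p) m)).1.pending.count a = 0 := by
        rw [Multiset.count_eq_zero]
        intro hmem'
        exact ha (mem_evFinset ((f (Nat.nth (fun n => g' n = p) m)).2.2.2 a hmem'))
      simp [this]
  · -- Upward compatibility
    rintro ⟨c₁, hc₁⟩ ⟨c₁', hc₁'⟩ ⟨c₂, hc₂⟩ ⟨hst, hsig, hpe⟩ hstep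
    obtain ⟨Q1, s1, P1, t1⟩ := c₁'
    simp only at hst hsig hpe
    cases hstep with
    | func f hf hn =>
        subst hst; cases hsig
        have hn' : nored P1 f.src := by
          intro e he _ hsrc
          exact hDI.1 f hf (hsrc ▸ evOf_src_initEv (hc₁'.2.2 e he))
        have hstep' : StepTP C ⟨f.src, Sig.none, P1, t1⟩
            ⟨f.src, Sig.cont (bodyEvents f.body) f.tgt, P1, t1⟩ :=
          StepTP.func f hf hn'
        exact ⟨⟨_, configOf_stepTP hwf hc₁' hstep'⟩,
          Relation.ReflTransGen.single hstep', rfl, rfl, hpe⟩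
    | @stateChange Q Q' Psi' Psi t =>
        subst hst; cases hsig
        have hstep' : StepTP C ⟨Q, Sig.cont Psi' Q', P1, t1⟩
            ⟨Q', Sig.none, Psi' + P1, t1⟩ := StepTP.stateChange
        exact ⟨⟨_, configOf_stepTP hwf hc₁' hstep'⟩,
          Relation.ReflTransGen.single hstep', rfl, rfl, add_le_add_right hpe _⟩
    | @eventMatch Q Psi t e he h0 hs =>
        subst hst; cases hsig
        have he' : e ∈ P1 := Multiset.mem_of_le hpe he
        have hstep' : StepTP C ⟨Q, Sig.none, P1, t1⟩
            ⟨Q, Sig.cont 0 e.tgt, P1.erase e, t1⟩ := StepTP.eventMatch e he' h0 hs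
        exact ⟨⟨_, configOf_stepTP hwf hc₁' hstep'⟩,
          Relation.ReflTransGen.single hstep', rfl, rfl, Multiset.erase_le_erase e hpe⟩
    | @tickPlus Q Psi t hn =>
        subst hst; cases hsig
        have hstep' : StepTP C ⟨Q, Sig.none, P1, t1⟩
            ⟨Q, Sig.none, tickDown P1, t1 + 1⟩ := StepTP.tickPlus hn
        exact ⟨⟨_, configOf_stepTP hwf hc₁' hstep'⟩,
          Relation.ReflTransGen.single hstep', rfl, rfl,
          Multiset.map_le_map (Multiset.filter_le_filter _ hpe)⟩

end MicroStipula
end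

section
/- For every μStipula^DI+ contract C, the ordering ⪯ is upward compatible with →_tp; more precisely, if ⟨C(Q, Σ, Ψ), t⟩ →_tp ⟨C(Q', Σ', Ψ'), t'⟩ and Ψ ⪯ Ψ″, then there exists Ψ‴ such that ⟨C(Q, Σ, Ψ″), t⟩ →_tp ⟨C(Q', Σ', Ψ‴), t'⟩ and Ψ' ⪯ Ψ‴. -/
namespace MicroStipula

/-- For every μStipula^DI+ contract `C`, the ordering `⪯` is upward
compatible with `→_tp`: if `⟨C(Q, S, Ψ), t⟩ →_tp ⟨C(Q', S', Ψ'), t'⟩` and `Ψ ⪯ Ψ''`,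
then there exists a multiset `Θ` of pending events with
`⟨C(Q, S, Ψ''), t⟩ →_tp ⟨C(Q', S', Θ), t'⟩` and `Ψ' ⪯ Θ`. -/
theorem stepTP_upward_compatible (C : Contract) (hwf : C.WF) (hDI : DetInst C)
    (Q Q' : ℕ) (S S' : Sig) (Ψ Ψ' Ψ'' : Multiset Ev) (t t' : ℕ)
    (h₁ : ConfigOf C ⟨Q, S, Ψ, t⟩) (h₂ : ConfigOf C ⟨Q, S, Ψ'', t⟩)
    (hstep : StepTP C ⟨Q, S, Ψ, t⟩ ⟨Q', S', Ψ', t'⟩)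
    (hle : Ψ ≤ Ψ'') :
    ∃ Θ : Multiset Ev,
      StepTP C ⟨Q, S, Ψ'', t⟩ ⟨Q', S', Θ, t'⟩ ∧ Ψ' ≤ Θ := by
  cases hstep with
  | func f hf hn =>
    refine ⟨Ψ'', StepTP.func f hf ?_, hle⟩
    intro e he _ hsrc
    exact hDI.1 f hf (by
      obtain ⟨g, hg, d, hd, _, hsd, _, _⟩ := h₂.2.2 e he
      exact hsrc ▸ hsd ▸ ⟨g, hg, d, hd, rfl⟩)
  | stateChange =>
    exact ⟨_ + Ψ'', StepTP.stateChange, add_le_add_right hle _⟩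
  | eventMatch e he h0 hs =>
    exact ⟨Ψ''.erase e, StepTP.eventMatch e (Multiset.mem_of_le hle he) h0 hs,
      Multiset.erase_le_erase e hle⟩
  | tickPlus hn =>
    exact ⟨tickDown Ψ'', StepTP.tickPlus hn,
      Multiset.map_le_map (Multiset.filter_le_filter _ hle)⟩

end MicroStipula
end
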